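/- Let f(n) denote the number of words in [3]^n avoiding the generalized pattern 13-2. Then the identity (∑_{n ≥ 0} f(n)·x^n) · (1 - 2x)·(1 - 3x + x²) = (1 - x)² holds as an identity of formal power series over ℚ. -/

import Mathlib

open PowerSeries

/-- The `i`-th letter (1-based value in `{1,…,k}`) of a word `w ∈ [k]^n`,
with value `0` outside the word. -/
def letter {n k : ℕ} (w : Fin n → Fin k) (i : ℕ) : ℕ :=
  if h : i < n then (w ⟨i, h⟩ : ℕ) + 1 else 0

/-- `w` avoids the generalized pattern 13-2: there are no 0-based indices
`i, j` with `i + 2 ≤ j < n` such that `w i < w j < w (i+1)`. -/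
def Avoids13d2 {n k : ℕ} (w : Fin n → Fin k) : Prop :=
  ∀ i j : ℕ, i + 2 ≤ j → j < n →
    ¬ (letter w i < letter w j ∧ letter w j < letter w (i + 1))

/-- The number of words in `[3]^n` avoiding 13-2. -/
noncomputable def f (n : ℕ) : ℕ := Nat.card {w : Fin n → Fin 3 // Avoids13d2 w}

namespace Aux

open scoped Classical

/-- some `2` occurs in `w` -/
def Seen2 {n : ℕ} (w : Fin n → Fin 3) : Prop := ∃ j, letter w j = 2

/-- the first letter of `w` is `3` -/
def Head3 {n : ℕ} (w : Fin n → Fin 3) : Prop := letter w 0 = 3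

lemma letter_bounds {n : ℕ} (w : Fin n → Fin 3) {i : ℕ} (h : i < n) :
    1 ≤ letter w i ∧ letter w i ≤ 3 := by
  unfold letter; rw [dif_pos h]; have := (w ⟨i, h⟩).isLt; omega

lemma letter_eq_zero {n : ℕ} (w : Fin n → Fin 3) {i : ℕ} (h : ¬ i < n) :
    letter w i = 0 := by unfold letter; rw [dif_neg h]

lemma avoids_iff {n : ℕ} (w : Fin n → Fin 3) :
    Avoids13d2 w ↔ ∀ i j : ℕ, i + 2 ≤ j → j < n →
      ¬ (letter w i = 1 ∧ letter w (i + 1) = 3 ∧ letter w j = 2) := by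
  constructor
  · intro h i j hij hj hc
    exact h i j hij hj (by omega)
  · intro h i j hij hj hc
    have h1 := letter_bounds w (show i < n by omega)
    have h2 := letter_bounds w (show i + 1 < n by omega)
    have h3 := letter_bounds w hj
    exact h i j hij hj (by omega)

lemma letter_cons_zero {n : ℕ} (x : Fin 3) (w : Fin n → Fin 3) :
    letter (Fin.cons x w) 0 = (x : ℕ) + 1 := by
  unfold letter
  rw [dif_pos (Nat.succ_pos n)]
  rfl

lemma letter_cons_succ {n : ℕ} (x : Fin 3) (w : Fin n → Fin 3) (i : ℕ) :
    letter (Fin.cons x w) (i + 1) = letter w i := by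
  unfold letter
  by_cases h : i < n
  · rw [dif_pos (by omega : i + 1 < n + 1), dif_pos h]
    have : (⟨i + 1, by omega⟩ : Fin (n + 1)) = Fin.succ ⟨i, h⟩ := rfl
    rw [this, Fin.cons_succ]
  · rw [dif_neg (by omega), dif_neg h]

lemma seen2_cons {n : ℕ} (x : Fin 3) (w : Fin n → Fin 3) :
    Seen2 (Fin.cons x w) ↔ (x : ℕ) = 1 ∨ Seen2 w := by
  constructor
  · rintro ⟨j, hj⟩
    rcases j with _ | j
    · rw [letter_cons_zero] at hj; left; omega
    · rw [letter_cons_succ] at hj; right; exact ⟨j, hj⟩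
  · rintro (hx | ⟨j, hj⟩)
    · exact ⟨0, by rw [letter_cons_zero]; omega⟩
    · exact ⟨j + 1, by rw [letter_cons_succ]; exact hj⟩

lemma head3_cons {n : ℕ} (x : Fin 3) (w : Fin n → Fin 3) :
    Head3 (Fin.cons x w) ↔ (x : ℕ) = 2 := by
  unfold Head3; rw [letter_cons_zero]; omega

lemma avoids_cons {n : ℕ} (x : Fin 3) (w : Fin n → Fin 3) :
    Avoids13d2 (Fin.cons x w) ↔
      Avoids13d2 w ∧ ¬ ((x : ℕ) = 0 ∧ Head3 w ∧ Seen2 w) := by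
  rw [avoids_iff, avoids_iff]
  constructor
  · intro h
    constructor
    · intro i j hij hj hc
      exact h (i + 1) (j + 1) (by omega) (by omega)
        (by rw [letter_cons_succ, show i + 1 + 1 = (i + 1) + 1 from rfl,
              letter_cons_succ, letter_cons_succ]; exact hc)
    · rintro ⟨hx, h3, j, hj⟩
      have hjn : j < n := by
        by_contra hn; rw [letter_eq_zero w hn] at hj; omega
      have hj0 : j ≠ 0 := by
        intro h0; rw [h0] at hj; unfold Head3 at h3; omega
      refine h 0 (j + 1) (by omega) (by omega) ⟨?_, ?_, ?_⟩
      · rw [letter_cons_zero]; omega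
      · show letter (Fin.cons x w) (0 + 1) = 3
        rw [letter_cons_succ]; exact h3
      · rw [letter_cons_succ]; exact hj
  · rintro ⟨hw, hbad⟩ i j hij hj hc
    rcases i with _ | i
    · rcases j with _ | j
      · omega
      · rw [letter_cons_zero, show (0 : ℕ) + 1 = 0 + 1 from rfl, letter_cons_succ,
          letter_cons_succ] at hc
        exact hbad ⟨by omega, hc.2.1, ⟨j, hc.2.2⟩⟩
    · rcases j with _ | j
      · omega
      · rw [letter_cons_succ, show i + 1 + 1 = (i + 1) + 1 from rfl,
          letter_cons_succ, letter_cons_succ] at hc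
        exact hw i j (by omega) (by omega) hc

/-- count of words of length `n` satisfying `p` -/
noncomputable def cnt (n : ℕ) (p : (Fin n → Fin 3) → Prop) : ℕ :=
  (Finset.univ.filter p).card

lemma cnt_congr {n : ℕ} {p q : (Fin n → Fin 3) → Prop} (h : ∀ w, p w ↔ q w) :
    cnt n p = cnt n q := by
  unfold cnt
  congr 1
  exact Finset.filter_congr fun w _ => h w

lemma cnt_false {n : ℕ} : cnt n (fun _ => False) = 0 := by
  simp [cnt]

lemma cnt_split {n : ℕ} (p q : (Fin n → Fin 3) → Prop) :
    cnt n p = cnt n (fun w => p w ∧ q w) + cnt n (fun w => p w ∧ ¬ q w) := by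
  unfold cnt
  have h := Finset.card_filter_add_card_filter_not
    (s := (Finset.univ : Finset (Fin n → Fin 3)).filter p) q
  rw [Finset.filter_filter, Finset.filter_filter] at h
  convert h.symm using 2 <;> exact congrArg Finset.card (Finset.filter_congr_decidable _ _ _)

lemma f_eq_cnt (n : ℕ) : f n = cnt n Avoids13d2 := by
  rw [f, Nat.card_eq_fintype_card, cnt, ← Fintype.card_subtype]

lemma cnt_cons (n : ℕ) (p : (Fin (n + 1) → Fin 3) → Prop) :
    cnt (n + 1) p = cnt n (fun w => p (Fin.cons 0 w)) + cnt n (fun w => p (Fin.cons 1 w))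
      + cnt n (fun w => p (Fin.cons 2 w)) := by
  have e : {w : Fin (n + 1) → Fin 3 // p w} ≃
      (x : Fin 3) × {w : Fin n → Fin 3 // p (Fin.cons x w)} :=
    { toFun := fun w => ⟨w.1 0, Fin.tail w.1, by
        rw [Fin.cons_self_tail]; exact w.2⟩
      invFun := fun s => ⟨Fin.cons s.1 s.2.1, s.2.2⟩
      left_inv := fun w => Subtype.ext (Fin.cons_self_tail w.1)
      right_inv := fun s => by
        rcases s with ⟨x, w, hw⟩
        simp
        rfl }
  have h1 : cnt (n + 1) p = Fintype.card {w : Fin (n + 1) → Fin 3 // p w} := by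
    rw [cnt, ← Fintype.card_subtype]
  rw [h1, Fintype.card_congr e, Fintype.card_sigma, Fin.sum_univ_three]
  simp [cnt, Fintype.card_subtype]

-- the four state predicates
lemma recA (n : ℕ) :
    cnt (n + 1) (fun w => Avoids13d2 w ∧ ¬ Seen2 w ∧ ¬ Head3 w) =
      cnt n (fun w => Avoids13d2 w ∧ ¬ Seen2 w ∧ ¬ Head3 w)
      + cnt n (fun w => Avoids13d2 w ∧ ¬ Seen2 w ∧ Head3 w) := by
  rw [cnt_cons]
  have h0 : cnt n (fun w => (fun w => Avoids13d2 w ∧ ¬ Seen2 w ∧ ¬ Head3 w) (Fin.cons 0 w)) =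
      cnt n (fun w => Avoids13d2 w ∧ ¬ Seen2 w) := by
    apply cnt_congr; intro w
    simp only [avoids_cons, seen2_cons, head3_cons]
    norm_num
    tauto
  have h1 : cnt n (fun w => (fun w => Avoids13d2 w ∧ ¬ Seen2 w ∧ ¬ Head3 w) (Fin.cons 1 w)) =
      cnt n (fun _ => False) := by
    apply cnt_congr; intro w
    simp only [avoids_cons, seen2_cons, head3_cons]
    norm_num
  have h2 : cnt n (fun w => (fun w => Avoids13d2 w ∧ ¬ Seen2 w ∧ ¬ Head3 w) (Fin.cons 2 w)) =
      cnt n (fun _ => False) := by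
    apply cnt_congr; intro w
    simp only [avoids_cons, seen2_cons, head3_cons]
    norm_num
  rw [h0, h1, h2, cnt_false,
    cnt_split (fun w => Avoids13d2 w ∧ ¬ Seen2 w) (fun w => ¬ Head3 w)]
  have e1 : cnt n (fun w => (Avoids13d2 w ∧ ¬ Seen2 w) ∧ ¬ Head3 w) =
      cnt n (fun w => Avoids13d2 w ∧ ¬ Seen2 w ∧ ¬ Head3 w) := by
    apply cnt_congr; intro w; tauto
  have e2 : cnt n (fun w => (Avoids13d2 w ∧ ¬ Seen2 w) ∧ ¬ ¬ Head3 w) =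
      cnt n (fun w => Avoids13d2 w ∧ ¬ Seen2 w ∧ Head3 w) := by
    apply cnt_congr; intro w; tauto
  rw [e1, e2]
  omega


lemma recB (n : ℕ) :
    cnt (n + 1) (fun w => Avoids13d2 w ∧ ¬ Seen2 w ∧ Head3 w) =
      cnt n (fun w => Avoids13d2 w ∧ ¬ Seen2 w ∧ ¬ Head3 w)
      + cnt n (fun w => Avoids13d2 w ∧ ¬ Seen2 w ∧ Head3 w) := by
  rw [cnt_cons]
  have h0 : cnt n (fun w => (fun w => Avoids13d2 w ∧ ¬ Seen2 w ∧ Head3 w) (Fin.cons 0 w)) =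
      cnt n (fun _ => False) := by
    apply cnt_congr; intro w
    simp only [avoids_cons, seen2_cons, head3_cons]
    norm_num
  have h1 : cnt n (fun w => (fun w => Avoids13d2 w ∧ ¬ Seen2 w ∧ Head3 w) (Fin.cons 1 w)) =
      cnt n (fun _ => False) := by
    apply cnt_congr; intro w
    simp only [avoids_cons, seen2_cons, head3_cons]
    norm_num
  have h2 : cnt n (fun w => (fun w => Avoids13d2 w ∧ ¬ Seen2 w ∧ Head3 w) (Fin.cons 2 w)) =
      cnt n (fun w => Avoids13d2 w ∧ ¬ Seen2 w) := by
    apply cnt_congr; intro w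
    simp only [avoids_cons, seen2_cons, head3_cons]
    norm_num
  rw [h0, h1, h2, cnt_false,
    cnt_split (fun w => Avoids13d2 w ∧ ¬ Seen2 w) (fun w => ¬ Head3 w)]
  have e1 : cnt n (fun w => (Avoids13d2 w ∧ ¬ Seen2 w) ∧ ¬ Head3 w) =
      cnt n (fun w => Avoids13d2 w ∧ ¬ Seen2 w ∧ ¬ Head3 w) := by
    apply cnt_congr; intro w; tauto
  have e2 : cnt n (fun w => (Avoids13d2 w ∧ ¬ Seen2 w) ∧ ¬ ¬ Head3 w) =
      cnt n (fun w => Avoids13d2 w ∧ ¬ Seen2 w ∧ Head3 w) := by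
    apply cnt_congr; intro w; tauto
  rw [e1, e2]
  omega

lemma recC (n : ℕ) :
    cnt (n + 1) (fun w => Avoids13d2 w ∧ Seen2 w ∧ ¬ Head3 w) =
      cnt n (fun w => Avoids13d2 w ∧ Seen2 w ∧ ¬ Head3 w)
      + cnt n Avoids13d2 := by
  rw [cnt_cons]
  have h0 : cnt n (fun w => (fun w => Avoids13d2 w ∧ Seen2 w ∧ ¬ Head3 w) (Fin.cons 0 w)) =
      cnt n (fun w => Avoids13d2 w ∧ Seen2 w ∧ ¬ Head3 w) := by
    apply cnt_congr; intro w
    simp only [avoids_cons, seen2_cons, head3_cons]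
    norm_num
    tauto
  have h1 : cnt n (fun w => (fun w => Avoids13d2 w ∧ Seen2 w ∧ ¬ Head3 w) (Fin.cons 1 w)) =
      cnt n Avoids13d2 := by
    apply cnt_congr; intro w
    simp only [avoids_cons, seen2_cons, head3_cons]
    norm_num
  have h2 : cnt n (fun w => (fun w => Avoids13d2 w ∧ Seen2 w ∧ ¬ Head3 w) (Fin.cons 2 w)) =
      cnt n (fun _ => False) := by
    apply cnt_congr; intro w
    simp only [avoids_cons, seen2_cons, head3_cons]
    norm_num
  rw [h0, h1, h2, cnt_false]
  omega

lemma recD (n : ℕ) :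
    cnt (n + 1) (fun w => Avoids13d2 w ∧ Seen2 w ∧ Head3 w) =
      cnt n (fun w => Avoids13d2 w ∧ Seen2 w ∧ ¬ Head3 w)
      + cnt n (fun w => Avoids13d2 w ∧ Seen2 w ∧ Head3 w) := by
  rw [cnt_cons]
  have h0 : cnt n (fun w => (fun w => Avoids13d2 w ∧ Seen2 w ∧ Head3 w) (Fin.cons 0 w)) =
      cnt n (fun _ => False) := by
    apply cnt_congr; intro w
    simp only [avoids_cons, seen2_cons, head3_cons]
    norm_num
  have h1 : cnt n (fun w => (fun w => Avoids13d2 w ∧ Seen2 w ∧ Head3 w) (Fin.cons 1 w)) =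
      cnt n (fun _ => False) := by
    apply cnt_congr; intro w
    simp only [avoids_cons, seen2_cons, head3_cons]
    norm_num
  have h2 : cnt n (fun w => (fun w => Avoids13d2 w ∧ Seen2 w ∧ Head3 w) (Fin.cons 2 w)) =
      cnt n (fun w => Avoids13d2 w ∧ Seen2 w) := by
    apply cnt_congr; intro w
    simp only [avoids_cons, seen2_cons, head3_cons]
    norm_num
  have e2 : cnt n (fun w => Avoids13d2 w ∧ Seen2 w) =
      cnt n (fun w => Avoids13d2 w ∧ Seen2 w ∧ ¬ Head3 w)
      + cnt n (fun w => Avoids13d2 w ∧ Seen2 w ∧ Head3 w) := by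
    rw [cnt_split (fun w => Avoids13d2 w ∧ Seen2 w) (fun w => ¬ Head3 w)]
    have e3 : cnt n (fun w => (Avoids13d2 w ∧ Seen2 w) ∧ ¬ Head3 w) =
        cnt n (fun w => Avoids13d2 w ∧ Seen2 w ∧ ¬ Head3 w) := by
      apply cnt_congr; intro w; tauto
    have e4 : cnt n (fun w => (Avoids13d2 w ∧ Seen2 w) ∧ ¬ ¬ Head3 w) =
        cnt n (fun w => Avoids13d2 w ∧ Seen2 w ∧ Head3 w) := by
      apply cnt_congr; intro w; tauto
    rw [e3, e4]
  rw [h0, h1, h2, cnt_false, e2]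
  omega

lemma cnt_avoids (n : ℕ) :
    cnt n Avoids13d2 =
      cnt n (fun w => Avoids13d2 w ∧ ¬ Seen2 w ∧ ¬ Head3 w)
      + cnt n (fun w => Avoids13d2 w ∧ ¬ Seen2 w ∧ Head3 w)
      + cnt n (fun w => Avoids13d2 w ∧ Seen2 w ∧ ¬ Head3 w)
      + cnt n (fun w => Avoids13d2 w ∧ Seen2 w ∧ Head3 w) := by
  rw [cnt_split Avoids13d2 (fun w => Seen2 w),
    cnt_split (fun w => Avoids13d2 w ∧ Seen2 w) (fun w => Head3 w),
    cnt_split (fun w => Avoids13d2 w ∧ ¬ Seen2 w) (fun w => Head3 w)]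
  have e1 : cnt n (fun w => (Avoids13d2 w ∧ Seen2 w) ∧ Head3 w) =
      cnt n (fun w => Avoids13d2 w ∧ Seen2 w ∧ Head3 w) := by
    apply cnt_congr; intro w; tauto
  have e2 : cnt n (fun w => (Avoids13d2 w ∧ Seen2 w) ∧ ¬ Head3 w) =
      cnt n (fun w => Avoids13d2 w ∧ Seen2 w ∧ ¬ Head3 w) := by
    apply cnt_congr; intro w; tauto
  have e3 : cnt n (fun w => (Avoids13d2 w ∧ ¬ Seen2 w) ∧ Head3 w) =
      cnt n (fun w => Avoids13d2 w ∧ ¬ Seen2 w ∧ Head3 w) := by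
    apply cnt_congr; intro w; tauto
  have e4 : cnt n (fun w => (Avoids13d2 w ∧ ¬ Seen2 w) ∧ ¬ Head3 w) =
      cnt n (fun w => Avoids13d2 w ∧ ¬ Seen2 w ∧ ¬ Head3 w) := by
    apply cnt_congr; intro w; tauto
  rw [e1, e2, e3, e4]
  omega

lemma f_rec (n : ℕ) : f (n + 3) + 7 * f (n + 1) = 5 * f (n + 2) + 2 * f n := by
  have e0 := (f_eq_cnt n).trans (cnt_avoids n)
  have e1 := (f_eq_cnt (n + 1)).trans (cnt_avoids (n + 1))
  have e2 := (f_eq_cnt (n + 1 + 1)).trans (cnt_avoids (n + 1 + 1))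
  have e3 := (f_eq_cnt (n + 1 + 1 + 1)).trans (cnt_avoids (n + 1 + 1 + 1))
  have ca0 := cnt_avoids n
  have ca1 := cnt_avoids (n + 1)
  have ca2 := cnt_avoids (n + 1 + 1)
  have hA0 := recA n; have hA1 := recA (n + 1); have hA2 := recA (n + 1 + 1)
  have hB0 := recB n; have hB1 := recB (n + 1); have hB2 := recB (n + 1 + 1)
  have hC0 := recC n; have hC1 := recC (n + 1); have hC2 := recC (n + 1 + 1)
  have hD0 := recD n; have hD1 := recD (n + 1); have hD2 := recD (n + 1 + 1)
  have h2 : n + 2 = n + 1 + 1 := rfl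
  have h3 : n + 3 = n + 1 + 1 + 1 := rfl
  rw [h2, h3]
  omega

lemma avoids_of_small {n : ℕ} (hn : n ≤ 2) (w : Fin n → Fin 3) : Avoids13d2 w := by
  intro i j hij hj
  omega

lemma f_small {n : ℕ} (hn : n ≤ 2) : f n = 3 ^ n := by
  rw [f, Nat.card_congr (Equiv.subtypeUnivEquiv (avoids_of_small hn)),
    Nat.card_eq_fintype_card, Fintype.card_fun]
  simp

end Aux

theorem stmt12 :
    (PowerSeries.mk fun n => (f n : ℚ)) * ((1 - 2 * X) * (1 - 3 * X + X ^ 2)) =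
      (1 - X : PowerSeries ℚ) ^ 2 := by
  have key : ∀ n : ℕ, (f (n + 3) : ℚ) + 7 * f (n + 1) = 5 * f (n + 2) + 2 * f n := by
    intro n
    exact_mod_cast congrArg (Nat.cast : ℕ → ℚ) (Aux.f_rec n)
  have f0 : f 0 = 1 := by simpa using Aux.f_small (by norm_num : (0:ℕ) ≤ 2)
  have f1 : f 1 = 3 := by simpa using Aux.f_small (by norm_num : (1:ℕ) ≤ 2)
  have f2 : f 2 = 9 := by simpa using Aux.f_small (by norm_num : (2:ℕ) ≤ 2)
  have hL : (PowerSeries.mk fun n => (f n : ℚ)) * ((1 - 2 * X) * (1 - 3 * X + X ^ 2)) =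
      (PowerSeries.mk fun n => (f n : ℚ))
      - C (5 : ℚ) * ((PowerSeries.mk fun n => (f n : ℚ)) * X ^ 1)
      + C (7 : ℚ) * ((PowerSeries.mk fun n => (f n : ℚ)) * X ^ 2)
      - C (2 : ℚ) * ((PowerSeries.mk fun n => (f n : ℚ)) * X ^ 3) := by
    rw [show (C (5 : ℚ) : PowerSeries ℚ) = 5 from map_ofNat _ 5,
      show (C (7 : ℚ) : PowerSeries ℚ) = 7 from map_ofNat _ 7,
      show (C (2 : ℚ) : PowerSeries ℚ) = 2 from map_ofNat _ 2]
    ring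
  have hR : ((1 - X : PowerSeries ℚ)) ^ 2 = 1 - C (2 : ℚ) * X ^ 1 + X ^ 2 := by
    rw [show (C (2 : ℚ) : PowerSeries ℚ) = 2 from map_ofNat _ 2]
    ring
  rw [hL, hR]
  ext n
  simp only [map_sub, map_add, PowerSeries.coeff_C_mul, PowerSeries.coeff_mul_X_pow',
    PowerSeries.coeff_mk, PowerSeries.coeff_one, PowerSeries.coeff_X_pow, PowerSeries.coeff_C]
  rcases n with _ | _ | _ | m
  · norm_num [f0]
  · norm_num [f0, f1]
  · norm_num [f0, f1, f2]
  · simp only [show m + 1 + 1 + 1 = m + 3 from rfl]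
    rw [show m + 3 - 1 = m + 2 from by omega, show m + 3 - 2 = m + 1 from by omega,
      show m + 3 - 3 = m from by omega,
      if_pos (by omega : 1 ≤ m + 3), if_pos (by omega : 2 ≤ m + 3),
      if_pos (by omega : 3 ≤ m + 3), if_neg (by omega : ¬ (m + 3 = 0)),
      if_neg (by omega : ¬ (m + 3 = 2)), if_neg (by omega : ¬ (m + 2 = 0))]
    have := key m
    simp only [ite_self]
    linarith
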